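/- For any $\alpha \in (0,1)$, the function $q_2(\rho,\alpha) = \frac{1+\rho}{\alpha} + \rho - \rho^{2-\alpha/2} + 2^{-\alpha}\alpha + \frac{1}{2} - \alpha$ defined for $\rho \geq 1$ satisfies: $q_2$ has a unique critical point $g > 1$ with $q_2(g,\alpha) > 0$, $q_2(\rho,\alpha) \to -\infty$ as $\rho \to \infty$, and consequently there exists a unique $\rho^* \in (g, \infty)$ such that $q_2(\rho^*,\alpha) = 0$. -/

import Mathlib

open Set Filter

theorem stmt_2 (α : ℝ) (hα : α ∈ Set.Ioo (0:ℝ) 1) :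
    ∃ g : ℝ, 1 < g ∧
      (1 + 1/α - (2 - α/2) * g ^ (1 - α/2) = 0) ∧
      (∀ g' : ℝ, 1 < g' → 1 + 1/α - (2 - α/2) * g' ^ (1 - α/2) = 0 → g' = g) ∧
      0 < (1+g)/α + g - g ^ (2 - α/2) + 2^(-α) * α + 1/2 - α ∧
      Tendsto (fun ρ : ℝ => (1+ρ)/α + ρ - ρ ^ (2 - α/2) + 2^(-α) * α + 1/2 - α)
        atTop atBot ∧
      ∃! ρ : ℝ, g < ρ ∧ (1+ρ)/α + ρ - ρ ^ (2 - α/2) + 2^(-α) * α + 1/2 - α = 0 := by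
  obtain ⟨ha0, ha1⟩ := hα
  have h1α : 1 < 1/α := (one_lt_div ha0).2 ha1
  set β : ℝ := 1 - α/2 with hβdef
  set B : ℝ := 2 - α/2 with hBdef
  set A : ℝ := 1 + 1/α with hAdef
  have hβpos : 0 < β := by rw [hβdef]; linarith
  have hβne : β ≠ 0 := ne_of_gt hβpos
  have hB1 : 1 < B := by rw [hBdef]; linarith
  have hBpos : 0 < B := by linarith
  have hApos : 0 < A := by rw [hAdef]; linarith
  have hAgtB : B < A := by rw [hAdef, hBdef]; linarith
  have hAB : 1 < A / B := (one_lt_div hBpos).2 hAgtB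
  have hABpos : 0 < A / B := by linarith
  set g : ℝ := (A / B) ^ (β⁻¹ : ℝ) with hgdef
  have hg1 : 1 < g :=
    (Real.one_lt_rpow_iff_of_pos hABpos).2 (Or.inl ⟨hAB, inv_pos.2 hβpos⟩)
  have hgpos : (0:ℝ) < g := by linarith
  have hgβ : g ^ (β : ℝ) = A / B := Real.rpow_inv_rpow (le_of_lt hABpos) hβne
  have hBA : B * (A / B) = A := by rw [mul_comm]; exact div_mul_cancel₀ A (ne_of_gt hBpos)
  have h2α : (0:ℝ) < 2 ^ (-α) := Real.rpow_pos_of_pos (by norm_num) _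
  have hC : 0 < 1/α + (2^(-α) * α + 1/2 - α) := by nlinarith
  -- critical point equation
  have hcrit : 1 + 1/α - B * g ^ (β : ℝ) = 0 := by
    rw [hgβ, hBA, hAdef]; ring
  have hB1β : B = 1 + β := by rw [hBdef, hβdef]; ring
  have hBβ : B - 1 = β := by rw [hBdef, hβdef]; ring
  have hgB : g ^ (B : ℝ) = g * (A / B) := by
    conv_lhs => rw [hB1β]
    rw [Real.rpow_add hgpos, Real.rpow_one, hgβ]
  -- positivity at g
  have h1B : 0 < 1 - 1/B := sub_pos.2 ((div_lt_one hBpos).2 hB1)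
  have hkey : (1+g)/α + g - g ^ (B:ℝ) + 2^(-α) * α + 1/2 - α
      = g * (A * (1 - 1/B)) + (1/α + (2^(-α) * α + 1/2 - α)) := by
    rw [hgB]
    linear_combination (-g) * hAdef
  have hfg : 0 < (1+g)/α + g - g ^ (B:ℝ) + 2^(-α) * α + 1/2 - α := by
    rw [hkey]
    exact add_pos (mul_pos hgpos (mul_pos hApos h1B)) hC
  -- tendsto atBot
  have htend : Tendsto (fun ρ : ℝ => (1+ρ)/α + ρ - ρ ^ (B:ℝ) + 2^(-α) * α + 1/2 - α)
      atTop atBot := by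
    have hmain : Tendsto (fun ρ : ℝ => ρ ^ (B:ℝ) *
        ((1/α + 1) * ρ ^ (-(B-1)) + (1/α + (2^(-α) * α + 1/2 - α)) * ρ ^ (-B) - 1))
        atTop atBot := by
      apply Filter.Tendsto.atTop_mul_neg (C := -1) (by norm_num) (tendsto_rpow_atTop hBpos)
      have h1 : Tendsto (fun ρ : ℝ => (1/α + 1) * ρ ^ (-(B-1))) atTop (nhds 0) := by
        have := (tendsto_rpow_neg_atTop (y := B - 1) (by linarith)).const_mul (1/α + 1)
        simpa using this
      have h2 : Tendsto (fun ρ : ℝ => (1/α + (2^(-α) * α + 1/2 - α)) * ρ ^ (-B))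
          atTop (nhds 0) := by
        have := (tendsto_rpow_neg_atTop hBpos).const_mul (1/α + (2^(-α) * α + 1/2 - α))
        simpa using this
      have := (h1.add h2).sub_const 1
      simpa using this
    apply hmain.congr'
    filter_upwards [eventually_gt_atTop (0:ℝ)] with ρ hρ
    have e1 : ρ ^ (B:ℝ) * ρ ^ (-(B-1)) = ρ := by
      rw [← Real.rpow_add hρ]; norm_num
    have e2 : ρ ^ (B:ℝ) * ρ ^ (-B) = 1 := by
      rw [← Real.rpow_add hρ]; norm_num
    linear_combination (1/α + 1) * e1 + (1/α + (2^(-α) * α + 1/2 - α)) * e2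
  -- derivative
  set f : ℝ → ℝ := fun ρ => (1+ρ)/α + ρ - ρ ^ (B:ℝ) + 2^(-α) * α + 1/2 - α with hfdef
  have hderiv : ∀ x : ℝ, 0 < x → HasDerivAt f (1/α + 1 - B * x ^ (β:ℝ)) x := by
    intro x hx
    have h1 : HasDerivAt (fun ρ : ℝ => (1+ρ)/α) (1/α) x := by
      simpa using ((hasDerivAt_id x).const_add (1:ℝ)).div_const α
    have h2 : HasDerivAt (fun ρ : ℝ => ρ ^ (B:ℝ)) (B * x ^ (B - 1)) x :=
      Real.hasDerivAt_rpow_const (Or.inl (ne_of_gt hx))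
    have h3 := ((((h1.add (hasDerivAt_id x)).sub h2).add_const (2^(-α) * α)).add_const
      (1/2)).sub_const α
    have h4 : HasDerivAt f (1/α + 1 - B * x ^ (B - 1)) x := by
      exact h3
    rwa [hBβ] at h4
  -- continuity
  have hfcont : ContinuousOn f (Ici g) := by
    have hB : ContinuousOn (fun ρ : ℝ => ρ ^ (B:ℝ)) (Ici g) :=
      ContinuousOn.rpow_const continuousOn_id
        (fun x hx => Or.inl (ne_of_gt (lt_of_lt_of_le hgpos hx)))
    exact (((((((continuousOn_const.add continuousOn_id).div_const α).add
      continuousOn_id).sub hB).add continuousOn_const).add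
      continuousOn_const).sub continuousOn_const)
  -- strict antitone on [g, ∞)
  have hanti : StrictAntiOn f (Ici g) := by
    apply strictAntiOn_of_deriv_neg (convex_Ici g) hfcont
    intro x hx
    rw [interior_Ici] at hx
    have hxg : g < x := hx
    have hxpos : 0 < x := lt_trans hgpos hxg
    rw [(hderiv x hxpos).deriv]
    have hlt : g ^ (β:ℝ) < x ^ (β:ℝ) := Real.rpow_lt_rpow (le_of_lt hgpos) hxg hβpos
    rw [hgβ] at hlt
    have hBA2 : A < B * x ^ (β:ℝ) := by
      have := (div_lt_iff₀ hBpos).1 hlt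
      linarith
    rw [hAdef] at hBA2
    linarith
  refine ⟨g, hg1, hcrit, ?_, hfg, htend, ?_⟩
  · -- uniqueness of critical point
    intro g' hg' heq
    have hg'β : g' ^ (β:ℝ) = g ^ (β:ℝ) := by
      rw [hgβ, eq_div_iff (ne_of_gt hBpos)]
      linear_combination -heq - hAdef
    rcases lt_trichotomy g' g with h | h | h
    · exact absurd hg'β (ne_of_lt (Real.rpow_lt_rpow (by linarith) h hβpos))
    · exact h
    · exact absurd hg'β.symm (ne_of_lt (Real.rpow_lt_rpow (le_of_lt hgpos) h hβpos))
  · -- unique root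
    obtain ⟨b, hb0, hbg⟩ :=
      ((htend.eventually (eventually_lt_atBot (0:ℝ))).and (eventually_gt_atTop g)).exists
    have hgb : g ≤ b := le_of_lt hbg
    obtain ⟨ρ, hρmem, hρ0⟩ := intermediate_value_Icc' hgb
      (hfcont.mono (Icc_subset_Ici_self)) ⟨le_of_lt hb0, le_of_lt hfg⟩
    have hgρ : g < ρ := by
      rcases lt_or_eq_of_le hρmem.1 with h | h
      · exact h
      · exfalso; rw [← h] at hρ0
        exact ne_of_gt hfg hρ0
    refine ⟨ρ, ⟨hgρ, hρ0⟩, ?_⟩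
    rintro y ⟨hy1, hy2⟩
    have hy2' : f y = 0 := hy2
    exact hanti.injOn (le_of_lt hy1) (le_of_lt hgρ) (hy2'.trans hρ0.symm)
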